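/- Let b₁, b₂ : ℂ^{d-1} × ℂ → ℂ be polynomials (in all variables), homogeneous of degrees k₁ and k₂ respectively. Suppose at a point (ξ', z₀) the 2×2 matrix [[b₁, b₂],[∂_z b₁, ∂_z b₂]] has nonzero determinant. Then for δ, δ̃ ∈ ℂ, the determinant of [[b₁(ξ', z₀+δ), b₂(ξ', z₀+δ)],[b₁(ξ', z₀+δ̃), b₂(ξ', z₀+δ̃)]] equals (δ̃−δ) times a function that is nonzero for |δ| + |δ̃| sufficiently small; in particular there exist ε > 0 and C > 0 such that |det| ≥ C|δ − δ̃| whenever |δ| + |δ̃| ≤ ε. -/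

import Mathlib

noncomputable def divDiffC (r : Polynomial ℂ) (x y : ℂ) : ℂ :=
  ∑ n ∈ Finset.range (r.natDegree + 1),
    r.coeff n * ∑ i ∈ Finset.range n, y ^ i * x ^ (n - 1 - i)

attribute [irreducible] divDiffC

lemma divDiffC_mul (r : Polynomial ℂ) (x y : ℂ) :
    (y - x) * divDiffC r x y = r.eval y - r.eval x := by
  unfold divDiffC
  rw [Finset.mul_sum, Polynomial.eval_eq_sum_range x,
    Polynomial.eval_eq_sum_range y, ← Finset.sum_sub_distrib]
  refine Finset.sum_congr rfl fun n _ => ?_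
  have h := geom_sum₂_mul y x n
  calc (y - x) * (r.coeff n * ∑ i ∈ Finset.range n, y ^ i * x ^ (n - 1 - i))
      = r.coeff n * ((∑ i ∈ Finset.range n, y ^ i * x ^ (n - 1 - i)) * (y - x)) := by ring
    _ = r.coeff n * y ^ n - r.coeff n * x ^ n := by rw [h]; ring

lemma divDiffC_self (r : Polynomial ℂ) (x : ℂ) :
    divDiffC r x x = (Polynomial.derivative r).eval x := by
  have hdeg : (Polynomial.derivative r).natDegree < r.natDegree + 1 :=
    lt_of_le_of_lt (Polynomial.natDegree_derivative_le r) (by omega)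
  unfold divDiffC
  rw [Polynomial.eval_eq_sum_range' hdeg]
  have hstep : ∀ n : ℕ, r.coeff n * ∑ i ∈ Finset.range n, x ^ i * x ^ (n - 1 - i)
      = r.coeff n * ((n : ℂ) * x ^ (n - 1)) := by
    intro n
    congr 1
    rw [Finset.sum_congr rfl (fun i hi => ?_), Finset.sum_const, Finset.card_range,
      nsmul_eq_mul]
    rw [← pow_add]
    congr 1
    have := Finset.mem_range.mp hi
    omega
  simp only [hstep]
  rw [Finset.sum_range_succ', Finset.sum_range_succ,
    Polynomial.coeff_derivative,
    Polynomial.coeff_eq_zero_of_natDegree_lt (by omega : r.natDegree < r.natDegree + 1)]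
  simp only [Nat.cast_zero, zero_mul, mul_zero, add_zero]
  refine Finset.sum_congr rfl fun i _ => ?_
  rw [Polynomial.coeff_derivative]
  push_cast
  ring

lemma divDiffC_continuous (r : Polynomial ℂ) :
    Continuous fun w : ℂ × ℂ => divDiffC r w.1 w.2 := by
  unfold divDiffC
  refine continuous_finset_sum _ fun n _ => Continuous.mul continuous_const ?_
  exact continuous_finset_sum _ fun i _ =>
    ((continuous_snd.pow i).mul (continuous_fst.pow _))

lemma contAuxLS (p q : Polynomial ℂ) (z₀ : ℂ) :
    Continuous fun w : ℂ × ℂ =>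
      p.eval (z₀ + w.1) * divDiffC q (z₀ + w.1) (z₀ + w.2)
        - q.eval (z₀ + w.1) * divDiffC p (z₀ + w.1) (z₀ + w.2) := by
  have hpair : Continuous fun w : ℂ × ℂ => ((z₀ + w.1, z₀ + w.2) : ℂ × ℂ) :=
    (continuous_const.add continuous_fst).prodMk (continuous_const.add continuous_snd)
  have h1 : Continuous fun w : ℂ × ℂ => p.eval (z₀ + w.1) :=
    p.continuous.comp (continuous_const.add continuous_fst)
  have h2 : Continuous fun w : ℂ × ℂ => q.eval (z₀ + w.1) :=
    q.continuous.comp (continuous_const.add continuous_fst)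
  have h3 : Continuous fun w : ℂ × ℂ => divDiffC q (z₀ + w.1) (z₀ + w.2) :=
    (divDiffC_continuous q).comp hpair
  have h4 : Continuous fun w : ℂ × ℂ => divDiffC p (z₀ + w.1) (z₀ + w.2) :=
    (divDiffC_continuous p).comp hpair
  exact (h1.mul h3).sub (h2.mul h4)

theorem stmt_15 {d : ℕ} (k₁ k₂ : ℕ) (b₁ b₂ : (Fin d → ℂ) → ℂ → ℂ)
    (hpoly₁ : ∀ ξ : Fin d → ℂ, ∃ p : Polynomial ℂ, ∀ z, b₁ ξ z = p.eval z)
    (hpoly₂ : ∀ ξ : Fin d → ℂ, ∃ p : Polynomial ℂ, ∀ z, b₂ ξ z = p.eval z)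
    (hhom₁ : ∀ (t : ℂ) (ξ : Fin d → ℂ) (z : ℂ), b₁ (t • ξ) (t * z) = t ^ k₁ * b₁ ξ z)
    (hhom₂ : ∀ (t : ℂ) (ξ : Fin d → ℂ) (z : ℂ), b₂ (t • ξ) (t * z) = t ^ k₂ * b₂ ξ z)
    (ξ' : Fin d → ℂ) (z₀ : ℂ)
    (hdet : b₁ ξ' z₀ * deriv (b₂ ξ') z₀ - b₂ ξ' z₀ * deriv (b₁ ξ') z₀ ≠ 0) :
    ∃ ε > (0 : ℝ), ∃ C > (0 : ℝ), ∀ δ δ' : ℂ,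
      ‖δ‖ + ‖δ'‖ ≤ ε →
      C * ‖δ - δ'‖ ≤
        ‖b₁ ξ' (z₀ + δ) * b₂ ξ' (z₀ + δ') -
          b₂ ξ' (z₀ + δ) * b₁ ξ' (z₀ + δ')‖ := by
  obtain ⟨p, hp⟩ := hpoly₁ ξ'
  obtain ⟨q, hq⟩ := hpoly₂ ξ'
  have hb1 : b₁ ξ' = fun z => p.eval z := funext hp
  have hb2 : b₂ ξ' = fun z => q.eval z := funext hq
  set H : ℂ × ℂ → ℂ := fun w =>
    p.eval (z₀ + w.1) * divDiffC q (z₀ + w.1) (z₀ + w.2)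
      - q.eval (z₀ + w.1) * divDiffC p (z₀ + w.1) (z₀ + w.2) with hH
  have hcont : Continuous H := contAuxLS p q z₀
  have hkey : ∀ δ δ' : ℂ, (δ' - δ) * H (δ, δ') =
      p.eval (z₀ + δ) * q.eval (z₀ + δ') - q.eval (z₀ + δ) * p.eval (z₀ + δ') := by
    intro δ δ'
    have hq' := divDiffC_mul q (z₀ + δ) (z₀ + δ')
    have hp' := divDiffC_mul p (z₀ + δ) (z₀ + δ')
    have hδ : (z₀ + δ') - (z₀ + δ) = δ' - δ := by ring
    rw [hδ] at hq' hp'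
    calc (δ' - δ) * H (δ, δ')
        = p.eval (z₀ + δ) * ((δ' - δ) * divDiffC q (z₀ + δ) (z₀ + δ'))
          - q.eval (z₀ + δ) * ((δ' - δ) * divDiffC p (z₀ + δ) (z₀ + δ')) := by
          simp only [hH]; ring
      _ = _ := by rw [hq', hp']; ring
  have hH0 : H (0, 0) = b₁ ξ' z₀ * deriv (b₂ ξ') z₀ - b₂ ξ' z₀ * deriv (b₁ ξ') z₀ := by
    have h1 : deriv (b₁ ξ') z₀ = (Polynomial.derivative p).eval z₀ := by
      rw [hb1]; exact Polynomial.deriv (𝕜 := ℂ) (p := p) (x := z₀)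
    have h2 : deriv (b₂ ξ') z₀ = (Polynomial.derivative q).eval z₀ := by
      rw [hb2]; exact Polynomial.deriv (𝕜 := ℂ) (p := q) (x := z₀)
    simp only [hH, add_zero, divDiffC_self, h1, h2, hp z₀, hq z₀]
  have h0 : (0 : ℝ) < ‖H (0, 0)‖ := by
    rw [hH0]; exact norm_pos_iff.mpr hdet
  obtain ⟨ε, hε, hball⟩ :=
    Metric.continuousAt_iff.mp (hcont.continuousAt (x := ((0 : ℂ), (0 : ℂ))))
      (‖H (0, 0)‖ / 2) (half_pos h0)
  refine ⟨ε / 2, by positivity, ‖H (0, 0)‖ / 2, half_pos h0, ?_⟩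
  intro δ δ' hsum
  have hdist : dist ((δ, δ') : ℂ × ℂ) ((0 : ℂ), (0 : ℂ)) < ε := by
    rw [Prod.dist_eq]
    have h1 : dist δ 0 ≤ ε / 2 := by
      rw [Complex.dist_eq, sub_zero]
      have := norm_nonneg δ'
      linarith
    have h2 : dist δ' 0 ≤ ε / 2 := by
      rw [Complex.dist_eq, sub_zero]
      have := norm_nonneg δ
      linarith
    calc max (dist δ 0) (dist δ' 0) ≤ ε / 2 := max_le h1 h2
      _ < ε := by linarith
  have hclose := hball hdist
  have hlow : ‖H (0, 0)‖ / 2 ≤ ‖H (δ, δ')‖ := by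
    have htri : ‖H (0, 0)‖ ≤
        ‖H (0, 0) - H (δ, δ')‖ + ‖H (δ, δ')‖ := by
      simpa using norm_add_le (H (0, 0) - H (δ, δ')) (H (δ, δ'))
    rw [Complex.dist_eq] at hclose
    have h3 : ‖H (0, 0) - H (δ, δ')‖ < ‖H (0, 0)‖ / 2 := by
      rw [← norm_neg]; simpa [neg_sub] using hclose
    linarith
  have hG : b₁ ξ' (z₀ + δ) * b₂ ξ' (z₀ + δ') - b₂ ξ' (z₀ + δ) * b₁ ξ' (z₀ + δ')
      = (δ' - δ) * H (δ, δ') := by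
    rw [hp, hp, hq, hq, hkey]
  rw [hG, norm_mul]
  have habs : ‖δ' - δ‖ = ‖δ - δ'‖ := by
    rw [← norm_neg, neg_sub]
  rw [habs]
  have hnn := norm_nonneg (δ - δ')
  calc ‖H (0, 0)‖ / 2 * ‖δ - δ'‖
      ≤ ‖H (δ, δ')‖ * ‖δ - δ'‖ :=
        mul_le_mul_of_nonneg_right hlow hnn
    _ = ‖δ - δ'‖ * ‖H (δ, δ')‖ := by ring
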